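/- Let E be a sublinear expectation on H, Y ∈ H, ε ∈ [0,1), and G(a) = a⁺ - ε·a⁻. Suppose that E[G(ψ(Y))] = G(E[ψ(Y)]) for all bounded Lipschitz ψ: ℝ → ℝ. Then E[ψ⁺(Y)] = (E[ψ(Y)])⁺ for all bounded Lipschitz ψ, where ψ⁺(y) = max(ψ(y),0). -/

import Mathlib

structure SLE (Ω : Type*) where
  H : Submodule ℝ (Ω → ℝ)
  E : (Ω → ℝ) → ℝ
  const_mem : ∀ c : ℝ, (fun _ => c) ∈ H
  mono : ∀ f g, f ∈ H → g ∈ H → (∀ ω, f ω ≤ g ω) → E f ≤ E g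
  const : ∀ c : ℝ, E (fun _ => c) = c
  subadd : ∀ f g, f ∈ H → g ∈ H → E (f + g) ≤ E f + E g
  poshom : ∀ f, f ∈ H → ∀ l : ℝ, 0 ≤ l → E (l • f) = l * E f

def BLip (φ : ℝ → ℝ) : Prop :=
  (∃ K, LipschitzWith K φ) ∧ ∃ C, ∀ x, |φ x| ≤ C

lemma blip_aux (a b : ℝ) (ψ : ℝ → ℝ) (hψ : BLip ψ) :
    BLip (fun x => a * max (ψ x) 0 + b * max (-(ψ x)) 0) := by
  obtain ⟨⟨K, hK⟩, C, hC⟩ := hψ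
  have hC0 : 0 ≤ C := le_trans (abs_nonneg _) (hC 0)
  constructor
  · refine ⟨(|a| + |b|).toNNReal * K,
      LipschitzWith.of_dist_le_mul fun x y => ?_⟩
    have h1 : |max (ψ x) 0 - max (ψ y) 0| ≤ |ψ x - ψ y| := abs_max_sub_max_le_abs _ _ _
    have h2 : |max (-(ψ x)) 0 - max (-(ψ y)) 0| ≤ |ψ x - ψ y| := by
      have h := abs_max_sub_max_le_abs (-(ψ x)) (-(ψ y)) 0
      have h' : |-(ψ x) - -(ψ y)| = |ψ x - ψ y| := by
        rw [show -(ψ x) - -(ψ y) = -(ψ x - ψ y) by ring, abs_neg]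
      rw [h'] at h
      exact h
    have hd : dist (ψ x) (ψ y) ≤ (K : ℝ) * dist x y := hK.dist_le_mul x y
    simp only [Real.dist_eq] at hd ⊢
    have e : (a * max (ψ x) 0 + b * max (-(ψ x)) 0) - (a * max (ψ y) 0 + b * max (-(ψ y)) 0)
        = a * (max (ψ x) 0 - max (ψ y) 0) + b * (max (-(ψ x)) 0 - max (-(ψ y)) 0) := by ring
    rw [e, NNReal.coe_mul, Real.coe_toNNReal _ (by positivity : (0:ℝ) ≤ |a| + |b|)]
    calc |a * (max (ψ x) 0 - max (ψ y) 0) + b * (max (-(ψ x)) 0 - max (-(ψ y)) 0)|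
        ≤ |a * (max (ψ x) 0 - max (ψ y) 0)| + |b * (max (-(ψ x)) 0 - max (-(ψ y)) 0)| :=
          abs_add_le _ _
      _ = |a| * |max (ψ x) 0 - max (ψ y) 0| + |b| * |max (-(ψ x)) 0 - max (-(ψ y)) 0| := by
          rw [abs_mul, abs_mul]
      _ ≤ |a| * |ψ x - ψ y| + |b| * |ψ x - ψ y| := by gcongr
      _ = (|a| + |b|) * |ψ x - ψ y| := by ring
      _ ≤ (|a| + |b|) * ((K : ℝ) * |x - y|) :=
          mul_le_mul_of_nonneg_left hd (by positivity)
      _ = (|a| + |b|) * (K : ℝ) * |x - y| := by ring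
  · refine ⟨(|a| + |b|) * C, fun x => ?_⟩
    have p1 : |max (ψ x) 0| ≤ C := by
      rw [abs_of_nonneg (le_max_right _ _)]
      exact max_le (le_trans (le_abs_self _) (hC x)) hC0
    have p2 : |max (-(ψ x)) 0| ≤ C := by
      rw [abs_of_nonneg (le_max_right _ _)]
      exact max_le (le_trans (neg_le_abs _) (hC x)) hC0
    calc |a * max (ψ x) 0 + b * max (-(ψ x)) 0|
        ≤ |a| * |max (ψ x) 0| + |b| * |max (-(ψ x)) 0| := by
          refine (abs_add_le _ _).trans ?_; rw [abs_mul, abs_mul]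
      _ ≤ (|a| + |b|) * C := by nlinarith [abs_nonneg a, abs_nonneg b]

lemma G_step (ε : ℝ) (hε : 0 ≤ ε) (n : ℕ) (a : ℝ) :
    max (max a 0 - ε ^ n * max (-a) 0) 0 - ε * max (-(max a 0 - ε ^ n * max (-a) 0)) 0
      = max a 0 - ε ^ (n + 1) * max (-a) 0 := by
  have hn : (0:ℝ) ≤ ε ^ n := pow_nonneg hε n
  rcases le_total a 0 with ha | ha
  · have h1 : max a 0 = 0 := max_eq_right ha
    have h2 : max (-a) 0 = -a := max_eq_left (by linarith)
    rw [h1, h2]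
    have h3 : (0:ℝ) - ε ^ n * -a = ε ^ n * a := by ring
    rw [h3]
    have h4 : ε ^ n * a ≤ 0 := mul_nonpos_iff.mpr (Or.inl ⟨hn, ha⟩)
    rw [max_eq_right h4, max_eq_left (by linarith : (0:ℝ) ≤ -(ε ^ n * a))]
    ring
  · have h1 : max a 0 = a := max_eq_left ha
    have h2 : max (-a) 0 = 0 := max_eq_right (by linarith)
    rw [h1, h2]
    have h3 : a - ε ^ n * 0 = a := by ring
    rw [h3, max_eq_left ha, max_eq_right (by linarith : -a ≤ 0)]
    ring

theorem stmt7 {Ω : Type*} (S : SLE Ω) (Y : Ω → ℝ) (hY : Y ∈ S.H)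
    (hcomp : ∀ φ : ℝ → ℝ, BLip φ → (fun ω => φ (Y ω)) ∈ S.H)
    (ε : ℝ) (hε : 0 ≤ ε) (hε1 : ε < 1)
    (G : ℝ → ℝ) (hG : ∀ a, G a = max a 0 - ε * max (-a) 0)
    (h : ∀ ψ, BLip ψ → S.E (fun ω => G (ψ (Y ω))) = G (S.E (fun ω => ψ (Y ω)))) :
    ∀ ψ, BLip ψ → S.E (fun ω => max (ψ (Y ω)) 0) = max (S.E (fun ω => ψ (Y ω))) 0 := by
  intro ψ hψ
  set m := S.E (fun ω => ψ (Y ω)) with hm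
  have hεn : ∀ n : ℕ, (0:ℝ) ≤ ε ^ n := fun n => pow_nonneg hε n
  -- key identity by induction
  have key : ∀ n : ℕ,
      S.E (fun ω => max (ψ (Y ω)) 0 - ε ^ n * max (-(ψ (Y ω))) 0)
        = max m 0 - ε ^ n * max (-m) 0 := by
    intro n
    induction n with
    | zero =>
      simp only [pow_zero, one_mul, max_zero_sub_max_neg_zero_eq_self]
      exact hm.symm
    | succ n ih =>
      have hψ' : BLip (fun x => max (ψ x) 0 - ε ^ n * max (-(ψ x)) 0) := by
        have := blip_aux 1 (-(ε ^ n)) ψ hψ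
        simpa [sub_eq_add_neg, neg_mul] using this
      have h1 := h (fun x => max (ψ x) 0 - ε ^ n * max (-(ψ x)) 0) hψ'
      simp only [hG] at h1
      rw [ih, G_step ε hε n m] at h1
      rw [← h1]
      exact congrArg S.E (funext fun ω => (G_step ε hε n (ψ (Y ω))).symm)
  -- memberships
  have hbu : BLip (fun x => max (ψ x) 0) := by
    have := blip_aux 1 0 ψ hψ
    simpa using this
  have hbv : BLip (fun x => max (-(ψ x)) 0) := by
    have := blip_aux 0 1 ψ hψ
    simpa using this
  have hu : (fun ω => max (ψ (Y ω)) 0) ∈ S.H := hcomp (fun x => max (ψ x) 0) hbu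
  have hv : (fun ω => max (-(ψ (Y ω))) 0) ∈ S.H := hcomp (fun x => max (-(ψ x)) 0) hbv
  set u : Ω → ℝ := fun ω => max (ψ (Y ω)) 0 with hu_def
  set v : Ω → ℝ := fun ω => max (-(ψ (Y ω))) 0 with hv_def
  have hw : ∀ n : ℕ, (fun ω => max (ψ (Y ω)) 0 - ε ^ n * max (-(ψ (Y ω))) 0)
      = u - (ε ^ n) • v := by
    intro n; funext ω
    simp [hu_def, hv_def, Pi.sub_apply, Pi.smul_apply, smul_eq_mul]
  have hkey' : ∀ n, S.E (u - (ε ^ n) • v) = max m 0 - ε ^ n * max (-m) 0 := by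
    intro n; rw [← hw n]; exact key n
  have hmemw : ∀ n : ℕ, u - (ε ^ n) • v ∈ S.H := fun n =>
    Submodule.sub_mem _ hu (Submodule.smul_mem _ _ hv)
  have up : ∀ n : ℕ, S.E u ≤ max m 0 - ε ^ n * max (-m) 0 + ε ^ n * S.E v := by
    intro n
    have hsplit : u = (u - (ε ^ n) • v) + (ε ^ n) • v := (sub_add_cancel u _).symm
    calc S.E u = S.E ((u - (ε ^ n) • v) + (ε ^ n) • v) := by rw [← hsplit]
      _ ≤ S.E (u - (ε ^ n) • v) + S.E ((ε ^ n) • v) :=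
          S.subadd _ _ (hmemw n) (Submodule.smul_mem _ _ hv)
      _ = max m 0 - ε ^ n * max (-m) 0 + ε ^ n * S.E v := by
          rw [hkey' n, S.poshom v hv _ (hεn n)]
  have hEnegv : S.E (-v) ≤ 0 := by
    have hmono := S.mono (-v) (fun _ => (0:ℝ)) (Submodule.neg_mem _ hv) (S.const_mem 0)
      (fun ω => by
        have : (0:ℝ) ≤ v ω := le_max_right _ _
        simpa [Pi.neg_apply] using neg_nonpos.mpr this)
    simpa [S.const 0] using hmono
  have lo : ∀ n : ℕ, max m 0 - ε ^ n * max (-m) 0 ≤ S.E u + ε ^ n * S.E (-v) := by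
    intro n
    have hsplit : u - (ε ^ n) • v = u + (ε ^ n) • (-v) := by
      rw [sub_eq_add_neg, ← smul_neg]
    calc max m 0 - ε ^ n * max (-m) 0 = S.E (u - (ε ^ n) • v) := (hkey' n).symm
      _ = S.E (u + (ε ^ n) • (-v)) := by rw [hsplit]
      _ ≤ S.E u + S.E ((ε ^ n) • (-v)) :=
          S.subadd _ _ hu (Submodule.smul_mem _ _ (Submodule.neg_mem _ hv))
      _ = S.E u + ε ^ n * S.E (-v) := by
          rw [S.poshom _ (Submodule.neg_mem _ hv) _ (hεn n)]
  set Cst : ℝ := max (S.E v - max (-m) 0) (max (-m) 0) with hCst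
  have bound : ∀ n : ℕ, |S.E u - max m 0| ≤ ε ^ n * Cst := by
    intro n
    rw [abs_sub_le_iff]
    constructor
    · have p3 : ε ^ n * (S.E v - max (-m) 0) ≤ ε ^ n * Cst :=
        mul_le_mul_of_nonneg_left (le_max_left _ _) (hεn n)
      have e : ε ^ n * (S.E v - max (-m) 0) = ε ^ n * S.E v - ε ^ n * max (-m) 0 := by ring
      linarith [up n]
    · have p1 : ε ^ n * S.E (-v) ≤ ε ^ n * 0 :=
        mul_le_mul_of_nonneg_left hEnegv (hεn n)
      have p2 : ε ^ n * max (-m) 0 ≤ ε ^ n * Cst :=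
        mul_le_mul_of_nonneg_left (le_max_right _ _) (hεn n)
      have := lo n
      nlinarith
  have htend : Filter.Tendsto (fun n : ℕ => ε ^ n * Cst) Filter.atTop (nhds 0) := by
    have := (tendsto_pow_atTop_nhds_zero_of_lt_one hε hε1).mul_const Cst
    simpa using this
  have habs : |S.E u - max m 0| ≤ 0 := ge_of_tendsto' htend bound
  have : S.E u - max m 0 = 0 := abs_eq_zero.mp (le_antisymm habs (abs_nonneg _))
  linarith
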